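/- Let F(x,y) be a continuously differentiable potential function of the 1-form (x²+y²−1)^{−3/2}(1−y)(y−x+1) dx + (x²+y²−1)^{−3/2}(1−x)(x−y+1) dy on a region where x²+y² > 1. Then every level curve of F satisfies (1−c̄²)x² + (1−c̄²)y² + 2xy − 2x − 2y + 1 + c̄² = 0 for some constant c̄ ∈ ℝ. -/

import Mathlib

/-- The region W⁺ = {(x,y) : x < 1, y < 1, x + y > 1, x² + y² > 1}. -/
def Wplus : Set (ℝ × ℝ) :=
  {p | p.1 < 1 ∧ p.2 < 1 ∧ 1 < p.1 + p.2 ∧ 1 < p.1 ^ 2 + p.2 ^ 2}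

/-- The dx-coefficient of the 1-form. -/
noncomputable def Pcoef (p : ℝ × ℝ) : ℝ :=
  (p.1 ^ 2 + p.2 ^ 2 - 1) ^ (-(3 / 2 : ℝ)) * (1 - p.2) * (p.2 - p.1 + 1)

/-- The dy-coefficient of the 1-form. -/
noncomputable def Qcoef (p : ℝ × ℝ) : ℝ :=
  (p.1 ^ 2 + p.2 ^ 2 - 1) ^ (-(3 / 2 : ℝ)) * (1 - p.1) * (p.1 - p.2 + 1)

noncomputable def Gpot (p : ℝ × ℝ) : ℝ :=
  (p.1 + p.2 - 1) * (p.1 ^ 2 + p.2 ^ 2 - 1) ^ (-(1 / 2 : ℝ))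

lemma s_pos {p : ℝ × ℝ} (hp : p ∈ Wplus) : 0 < p.1 ^ 2 + p.2 ^ 2 - 1 := by
  have := hp.2.2.2; linarith

/-- one-dimensional slice convexity fact -/
lemma slice_mem {a y1 y2 t : ℝ} (ht0 : 0 ≤ t) (ht1 : t ≤ 1)
    (ha : a < 1) (h1 : y1 < 1) (h2 : y2 < 1) (hs1 : 1 < a + y1) (hs2 : 1 < a + y2)
    (hq1 : 1 < a ^ 2 + y1 ^ 2) (hq2 : 1 < a ^ 2 + y2 ^ 2) :
    ((1 - t) * y1 + t * y2 < 1) ∧ (1 < a + ((1 - t) * y1 + t * y2)) ∧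
      (1 < a ^ 2 + ((1 - t) * y1 + t * y2) ^ 2) := by
  have hy1 : 0 < y1 := by linarith
  have hy2 : 0 < y2 := by linarith
  rcases le_total y1 y2 with h | h
  · have hlo : y1 ≤ (1 - t) * y1 + t * y2 := by nlinarith
    have hhi : (1 - t) * y1 + t * y2 ≤ y2 := by nlinarith
    exact ⟨by linarith, by linarith, by nlinarith⟩
  · have hlo : y2 ≤ (1 - t) * y1 + t * y2 := by nlinarith
    have hhi : (1 - t) * y1 + t * y2 ≤ y1 := by nlinarith
    exact ⟨by linarith, by linarith, by nlinarith⟩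

lemma vert_seg {x y1 y2 : ℝ} (h1 : (x, y1) ∈ Wplus) (h2 : (x, y2) ∈ Wplus) :
    segment ℝ (x, y1) (x, y2) ⊆ Wplus := by
  intro z hz
  rw [segment_eq_image] at hz
  obtain ⟨t, ht, rfl⟩ := hz
  obtain ⟨ha, hb1, hc1, hd1⟩ := h1
  obtain ⟨_, hb2, hc2, hd2⟩ := h2
  have hsl := slice_mem ht.1 ht.2 ha hb1 hb2 hc1 hc2 hd1 hd2
  have hz1 : ((1 - t) • ((x, y1) : ℝ × ℝ) + t • (x, y2)) =
      (x, (1 - t) * y1 + t * y2) := by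
    simp [Prod.ext_iff, smul_eq_mul]; ring
  show (1 - t) • ((x, y1) : ℝ × ℝ) + t • (x, y2) ∈ Wplus
  rw [hz1]
  exact ⟨ha, hsl.1, hsl.2.1, hsl.2.2⟩

lemma horiz_seg {y x1 x2 : ℝ} (h1 : (x1, y) ∈ Wplus) (h2 : (x2, y) ∈ Wplus) :
    segment ℝ (x1, y) (x2, y) ⊆ Wplus := by
  intro z hz
  rw [segment_eq_image] at hz
  obtain ⟨t, ht, rfl⟩ := hz
  obtain ⟨ha1, hb, hc1, hd1⟩ := h1
  obtain ⟨ha2, _, hc2, hd2⟩ := h2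
  have hsl := slice_mem ht.1 ht.2 hb ha1 ha2 (by linarith) (by linarith)
    (by nlinarith) (by nlinarith)
  have hz1 : ((1 - t) • ((x1, y) : ℝ × ℝ) + t • (x2, y)) =
      ((1 - t) * x1 + t * x2, y) := by
    simp [Prod.ext_iff, smul_eq_mul]; ring
  show (1 - t) • ((x1, y) : ℝ × ℝ) + t • (x2, y) ∈ Wplus
  rw [hz1]
  refine ⟨hsl.1, hb, ?_, ?_⟩
  · have h' := hsl.2.1; dsimp only at h' ⊢; linarith
  · have h' := hsl.2.2; dsimp only at h' ⊢; nlinarith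

theorem stmt_2 (F : ℝ × ℝ → ℝ)
    (hF : ContDiffOn ℝ 1 F Wplus)
    (hFx : ∀ p ∈ Wplus, HasDerivAt (fun x : ℝ => F (x, p.2)) (Pcoef p) p.1)
    (hFy : ∀ p ∈ Wplus, HasDerivAt (fun y : ℝ => F (p.1, y)) (Qcoef p) p.2) :
    ∀ v : ℝ, ∃ cb : ℝ, ∀ p ∈ Wplus, F p = v →
      (1 - cb ^ 2) * p.1 ^ 2 + (1 - cb ^ 2) * p.2 ^ 2 + 2 * p.1 * p.2
        - 2 * p.1 - 2 * p.2 + 1 + cb ^ 2 = 0 := by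
  have hOpen : IsOpen Wplus := by
    have : Wplus = {p : ℝ × ℝ | p.1 < 1} ∩ {p | p.2 < 1} ∩ {p | 1 < p.1 + p.2} ∩
        {p | 1 < p.1 ^ 2 + p.2 ^ 2} := by
      ext p; simp [Wplus]; tauto
    rw [this]
    exact (((isOpen_lt continuous_fst continuous_const).inter
      (isOpen_lt continuous_snd continuous_const)).inter
      (isOpen_lt continuous_const (continuous_fst.add continuous_snd))).inter
      (isOpen_lt continuous_const (by fun_prop))
  set H : ℝ × ℝ → ℝ := fun q => F q + Gpot q with hH
  -- partial derivatives of Gpot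
  have hGx : ∀ p ∈ Wplus, HasDerivAt (fun x : ℝ => Gpot (x, p.2)) (-(Pcoef p)) p.1 := by
    intro p hp
    obtain ⟨x, y⟩ := p
    have hs : 0 < x ^ 2 + y ^ 2 - 1 := s_pos hp
    have h1 : HasDerivAt (fun t : ℝ => t ^ 2 + y ^ 2 - 1) (2 * x) x := by
      simpa using ((hasDerivAt_pow 2 x).add_const (y ^ 2)).sub_const 1
    have h2 := h1.rpow_const (p := -(1 / 2 : ℝ)) (Or.inl hs.ne')
    have h3 : HasDerivAt (fun t : ℝ => t + y - 1) 1 x := by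
      simpa using ((hasDerivAt_id x).add_const y).sub_const 1
    have h4 := h3.mul h2
    have e1 : (x ^ 2 + y ^ 2 - 1) ^ (-(1 / 2 : ℝ) - 1) =
        (x ^ 2 + y ^ 2 - 1) ^ (-(3 / 2 : ℝ)) := by norm_num
    have e2 : (x ^ 2 + y ^ 2 - 1) ^ (-(1 / 2 : ℝ)) =
        (x ^ 2 + y ^ 2 - 1) * (x ^ 2 + y ^ 2 - 1) ^ (-(3 / 2 : ℝ)) := by
      have h := Real.rpow_add hs 1 (-(3 / 2 : ℝ))
      norm_num [Real.rpow_one] at h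
      rw [← h]
    simp only [Gpot]
    refine h4.congr_deriv ?_
    rw [e1, e2]
    simp only [Pcoef]
    ring
  have hGy : ∀ p ∈ Wplus, HasDerivAt (fun y : ℝ => Gpot (p.1, y)) (-(Qcoef p)) p.2 := by
    intro p hp
    obtain ⟨x, y⟩ := p
    have hs : 0 < x ^ 2 + y ^ 2 - 1 := s_pos hp
    have h1 : HasDerivAt (fun t : ℝ => x ^ 2 + t ^ 2 - 1) (2 * y) y := by
      simpa using ((hasDerivAt_pow 2 y).const_add (x ^ 2)).sub_const 1
    have h2 := h1.rpow_const (p := -(1 / 2 : ℝ)) (Or.inl hs.ne')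
    have h3 : HasDerivAt (fun t : ℝ => x + t - 1) 1 y := by
      simpa using ((hasDerivAt_id y).const_add x).sub_const 1
    have h4 := h3.mul h2
    have e1 : (x ^ 2 + y ^ 2 - 1) ^ (-(1 / 2 : ℝ) - 1) =
        (x ^ 2 + y ^ 2 - 1) ^ (-(3 / 2 : ℝ)) := by norm_num
    have e2 : (x ^ 2 + y ^ 2 - 1) ^ (-(1 / 2 : ℝ)) =
        (x ^ 2 + y ^ 2 - 1) * (x ^ 2 + y ^ 2 - 1) ^ (-(3 / 2 : ℝ)) := by
      have h := Real.rpow_add hs 1 (-(3 / 2 : ℝ))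
      norm_num [Real.rpow_one] at h
      rw [← h]
    simp only [Gpot]
    refine h4.congr_deriv ?_
    rw [e1, e2]
    simp only [Qcoef]
    ring
  -- H has zero derivative on Wplus
  have hH0 : ∀ p ∈ Wplus, HasFDerivAt H (0 : ℝ × ℝ →L[ℝ] ℝ) p := by
    intro p hp
    have hs : 0 < p.1 ^ 2 + p.2 ^ 2 - 1 := s_pos hp
    have hdF : DifferentiableAt ℝ F p :=
      (hF.differentiableOn one_ne_zero).differentiableAt (hOpen.mem_nhds hp)
    have hd1 : DifferentiableAt ℝ (fun q : ℝ × ℝ => q.1 ^ 2 + q.2 ^ 2 - 1) p := by fun_prop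
    have hd2 : DifferentiableAt ℝ
        (fun q : ℝ × ℝ => (q.1 ^ 2 + q.2 ^ 2 - 1) ^ (-(1 / 2 : ℝ))) p :=
      hd1.rpow_const (Or.inl hs.ne')
    have hdG : DifferentiableAt ℝ Gpot p := by
      have hd3 : DifferentiableAt ℝ (fun q : ℝ × ℝ => q.1 + q.2 - 1) p := by fun_prop
      exact hd3.mul hd2
    have hdH : DifferentiableAt ℝ H p := hdF.add hdG
    set L := fderiv ℝ H p with hL
    have hLH : HasFDerivAt H L p := hdH.hasFDerivAt
    -- partial derivative in x
    have hinx : HasDerivAt (fun x : ℝ => (x, p.2)) ((1 : ℝ), (0 : ℝ)) p.1 :=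
      (hasDerivAt_id p.1).prodMk (hasDerivAt_const p.1 p.2)
    have hpx : HasDerivAt (fun x : ℝ => H (x, p.2)) (L (1, 0)) p.1 :=
      by have := hLH.comp_hasDerivAt p.1 hinx; exact this
    have hpx' : HasDerivAt (fun x : ℝ => H (x, p.2)) 0 p.1 := by
      have := (hFx p hp).add (hGx p hp)
      exact this.congr_deriv (by simp)
    have hx0 : L (1, 0) = 0 := hpx.unique hpx'
    have hiny : HasDerivAt (fun y : ℝ => (p.1, y)) ((0 : ℝ), (1 : ℝ)) p.2 :=
      (hasDerivAt_const p.2 p.1).prodMk (hasDerivAt_id p.2)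
    have hpy : HasDerivAt (fun y : ℝ => H (p.1, y)) (L (0, 1)) p.2 :=
      by have := hLH.comp_hasDerivAt p.2 hiny; exact this
    have hpy' : HasDerivAt (fun y : ℝ => H (p.1, y)) 0 p.2 := by
      have := (hFy p hp).add (hGy p hp)
      exact this.congr_deriv (by simp)
    have hy0 : L (0, 1) = 0 := hpy.unique hpy'
    have hLzero : L = 0 := by
      apply ContinuousLinearMap.ext
      intro v
      have hv : v = v.1 • ((1 : ℝ), (0 : ℝ)) + v.2 • ((0 : ℝ), (1 : ℝ)) := by
        ext <;> simp
      rw [hv, map_add, map_smul, map_smul, hx0, hy0]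
      simp
    rw [← hLzero]; exact hLH
  -- constancy of H along segments contained in Wplus
  have hseg : ∀ a b : ℝ × ℝ, segment ℝ a b ⊆ Wplus → H a = H b := by
    intro a b hsub
    have ha : a ∈ segment ℝ a b := left_mem_segment ℝ a b
    have hb : b ∈ segment ℝ a b := right_mem_segment ℝ a b
    have hb0 : ∀ x ∈ segment ℝ a b, ‖(0 : ℝ × ℝ →L[ℝ] ℝ)‖ ≤ (0 : ℝ) :=
      fun x _ => by simp
    have := (convex_segment a b).norm_image_sub_le_of_norm_hasFDerivWithin_le
      (f' := fun _ => (0 : ℝ × ℝ →L[ℝ] ℝ))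
      (fun x hx => (hH0 x (hsub hx)).hasFDerivWithinAt)
      hb0 ha hb
    simp only [zero_mul] at this
    have := norm_sub_eq_zero_iff.mp (le_antisymm this (norm_nonneg _))
    exact this.symm
  -- H is constant on Wplus
  have hconst : ∀ p ∈ Wplus, ∀ q ∈ Wplus, H p = H q := by
    intro p hp q hq
    set h : ℝ := max p.2 q.2 with hh
    have hp2 : 0 < p.2 := by have := hp.1; have := hp.2.2.1; linarith
    have hq2 : 0 < q.2 := by have := hq.1; have := hq.2.2.1; linarith
    have hh1 : h < 1 := max_lt hp.2.1 hq.2.1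
    have hph : (p.1, h) ∈ Wplus := by
      refine ⟨hp.1, hh1, ?_, ?_⟩
      · have := le_max_left p.2 q.2; have := hp.2.2.1; linarith
      · have h1 : p.2 ≤ h := le_max_left _ _
        have := hp.2.2.2; nlinarith
    have hqh : (q.1, h) ∈ Wplus := by
      refine ⟨hq.1, hh1, ?_, ?_⟩
      · have := le_max_right p.2 q.2; have := hq.2.2.1; linarith
      · have h1 : q.2 ≤ h := le_max_right _ _
        have := hq.2.2.2; nlinarith
    have e1 : H p = H (p.1, h) := by
      have := vert_seg (x := p.1) (y1 := p.2) (y2 := h) (by simpa using hp) hph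
      exact hseg _ _ this
    have e2 : H (p.1, h) = H (q.1, h) := hseg _ _ (horiz_seg hph hqh)
    have e3 : H (q.1, h) = H q := by
      have := vert_seg (x := q.1) (y1 := h) (y2 := q.2) hqh (by simpa using hq)
      exact hseg _ _ this
    rw [e1, e2, e3]
  intro v
  by_cases hex : ∃ p ∈ Wplus, F p = v
  · obtain ⟨p₀, hp₀, hFp₀⟩ := hex
    refine ⟨Gpot p₀, ?_⟩
    intro p hp hFp
    have hHpq : H p = H p₀ := hconst p hp p₀ hp₀
    have hGp : Gpot p = Gpot p₀ := by
      simp only [hH] at hHpq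
      rw [hFp, hFp₀] at hHpq
      linarith
    -- squaring
    have hs : 0 < p.1 ^ 2 + p.2 ^ 2 - 1 := s_pos hp
    set cb := Gpot p₀ with hcb
    have hG : (p.1 + p.2 - 1) * (p.1 ^ 2 + p.2 ^ 2 - 1) ^ (-(1 / 2 : ℝ)) = cb := hGp
    have hsq2 : ((p.1 ^ 2 + p.2 ^ 2 - 1) ^ (-(1 / 2 : ℝ))) ^ 2 =
        (p.1 ^ 2 + p.2 ^ 2 - 1)⁻¹ := by
      rw [← Real.rpow_natCast ((p.1 ^ 2 + p.2 ^ 2 - 1) ^ (-(1 / 2 : ℝ))) 2,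
        ← Real.rpow_mul hs.le]
      norm_num [Real.rpow_neg_one]
    have hkey : (p.1 + p.2 - 1) ^ 2 = cb ^ 2 * (p.1 ^ 2 + p.2 ^ 2 - 1) := by
      have h1 : (p.1 + p.2 - 1) ^ 2 * ((p.1 ^ 2 + p.2 ^ 2 - 1) ^ (-(1 / 2 : ℝ))) ^ 2
          = cb ^ 2 := by rw [← mul_pow, hG]
      rw [hsq2] at h1
      field_simp at h1
      linarith [h1]
    linear_combination hkey
  · refine ⟨0, ?_⟩
    intro p hp hFp
    exact absurd ⟨p, hp, hFp⟩ hex
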